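/- For all integers d >= 2, n >= 2, and k with 1 <= k < log_d(n-1) - 1, the k-subdivision of the complete graph K_n has twin-width at least d. -/

import Mathlib

namespace TwwPaper

open Finset

/-! ### Twin-width via contraction (partition-merge) sequences -/

/-- Two parts `P`, `Q` are *pure* (homogeneous) in `G`: the graph is either complete or empty
between them.  In the trigraph of a partition, a non-pure pair of parts is joined by a red edge. -/
def Pure {V : Type*} (G : SimpleGraph V) (P Q : Finset V) : Prop :=
  (∀ x ∈ P, ∀ y ∈ Q, G.Adj x y) ∨ (∀ x ∈ P, ∀ y ∈ Q, ¬ G.Adj x y)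

/-- The red degree of a part `P` in the partition `PP`: the number of other parts that are
not pure with respect to `P`. -/
noncomputable def redDeg {V : Type*} (G : SimpleGraph V) (PP : Finset (Finset V)) (P : Finset V) : ℕ :=
  {Q | Q ∈ PP ∧ Q ≠ P ∧ ¬ Pure G P Q}.ncard

/-- `QQ` is obtained from `PP` by merging (contracting) two parts. -/
def Merge {V : Type*} [DecidableEq V] (PP QQ : Finset (Finset V)) : Prop :=
  ∃ A ∈ PP, ∃ B ∈ PP, A ≠ B ∧ QQ = insert (A ∪ B) ((PP.erase A).erase B)

/-- One contraction step keeping every red degree at most `d`. -/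
def Step {V : Type*} [DecidableEq V] (G : SimpleGraph V) (d : ℕ) (PP QQ : Finset (Finset V)) :
    Prop :=
  Merge PP QQ ∧ ∀ P ∈ QQ, redDeg G QQ P ≤ d

/-- `G` admits a `d`-contraction sequence: starting from the partition into singletons one can
merge two parts at a time, always keeping all red degrees at most `d`, until one part remains. -/
def TwwLE {V : Type*} [Fintype V] [DecidableEq V] (G : SimpleGraph V) (d : ℕ) : Prop :=
  Relation.ReflTransGen (Step G d)
    (Finset.univ.image fun v => ({v} : Finset V)) {Finset.univ}

/-- The twin-width of a finite simple graph. -/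
noncomputable def tww {V : Type*} [Fintype V] [DecidableEq V] (G : SimpleGraph V) : ℕ :=
  sInf {d | TwwLE G d}

/-! ### Minors, separators, subgraph containment -/

/-- `H` is a minor of `G`: there is a minor model, i.e. pairwise disjoint nonempty connected
branch sets, one for each vertex of `H`, with an edge of `G` between the branch sets of any two
adjacent vertices of `H`. -/
def IsMinor {α β : Type*} (H : SimpleGraph α) (G : SimpleGraph β) : Prop :=
  ∃ f : α → Set β,
    (∀ a, (f a).Nonempty) ∧
    (∀ a, (G.induce (f a)).Connected) ∧
    (∀ a b, a ≠ b → Disjoint (f a) (f b)) ∧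
    ∀ a b, H.Adj a b → ∃ x ∈ f a, ∃ y ∈ f b, G.Adj x y

/-- `S` is a separator of `G` : deleting `S` leaves a nonempty disconnected graph. -/
def Sep {α : Type*} (G : SimpleGraph α) (S : Set α) : Prop :=
  (Sᶜ : Set α).Nonempty ∧ ¬ (G.induce Sᶜ).Preconnected

/-- `G` contains `F` as a (not necessarily induced) subgraph. -/
def ContainsSubgraph {α β : Type*} (G : SimpleGraph β) (F : SimpleGraph α) : Prop :=
  ∃ f : α → β, Function.Injective f ∧ ∀ a b, F.Adj a b → G.Adj (f a) (f b)

/-- `G` is internally 4-connected. -/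
def Internally4Connected {α : Type*} [Fintype α] (G : SimpleGraph α) : Prop :=
  5 ≤ Fintype.card α ∧
  (∀ S : Set α, S.ncard < 3 → ¬ Sep G S) ∧
  ∀ S : Set α, S.ncard = 3 → Sep G S →
    (∀ a ∈ S, ∀ b ∈ S, ¬ G.Adj a b) ∧ ∃ v ∉ S, G.neighborSet v = S

/-! ### The concrete graphs -/

/-- `K₆` minus one edge. -/
def K6minus : SimpleGraph (Fin 6) where
  Adj a b := a ≠ b ∧ ¬(({a, b} : Finset (Fin 6)) = {0, 1})
  symm := .mk <| by
    rintro a b ⟨h1, h2⟩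
    exact ⟨h1.symm, by rwa [Finset.pair_comm]⟩
  loopless := ⟨fun a h => h.1 rfl⟩

/-- The complement of the 7-cycle. -/
def C7c : SimpleGraph (Fin 7) := (SimpleGraph.cycleGraph 7)ᶜ

/-- Join of two graphs. -/
def joinG {α β : Type*} (G : SimpleGraph α) (H : SimpleGraph β) : SimpleGraph (α ⊕ β) where
  Adj x y :=
    match x, y with
    | Sum.inl a, Sum.inl b => G.Adj a b
    | Sum.inr a, Sum.inr b => H.Adj a b
    | _, _ => True
  symm := .mk <| by
    rintro (a | a) (b | b) h
    · exact G.symm.symm _ _ h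
    · exact trivial
    · exact trivial
    · exact H.symm.symm _ _ h
  loopless := .mk <| by
    rintro (a | a) h
    · exact G.loopless.irrefl a h
    · exact H.loopless.irrefl a h

/-- The join of `C₅` with the complement of `K₂` (two isolated vertices). -/
def C5K2c : SimpleGraph (Fin 5 ⊕ Fin 2) :=
  joinG (SimpleGraph.cycleGraph 5) (⊥ : SimpleGraph (Fin 2))

/-- The part of a vertex of `K_{3,1,3}`: `{0,1,2}`, `{3}`, `{4,5,6}`. -/
def triPart : Fin 7 → ℕ := fun a => if a.val < 3 then 0 else if a.val = 3 then 1 else 2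

/-- `K_{3,1̂,3}`: the complete tripartite graph `K_{3,1,3}` minus one edge from the middle
vertex `3` to each of the two size-3 parts (the edges `{0,3}` and `{3,4}`). -/
def K313hat : SimpleGraph (Fin 7) where
  Adj a b := triPart a ≠ triPart b ∧ ¬(({a, b} : Finset (Fin 7)) = {0, 3}) ∧
    ¬(({a, b} : Finset (Fin 7)) = {3, 4})
  symm := .mk <| by
    rintro a b ⟨h1, h2, h3⟩
    refine ⟨h1.symm, ?_, ?_⟩ <;> rwa [Finset.pair_comm]
  loopless := ⟨fun a h => h.1 rfl⟩

/-- The cube graph `Q₃`. -/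
def Q3 : SimpleGraph (Fin 2 × Fin 2 × Fin 2) where
  Adj x y := (x.1 ≠ y.1 ∧ x.2 = y.2) ∨ (x.1 = y.1 ∧ x.2.1 ≠ y.2.1 ∧ x.2.2 = y.2.2) ∨
    (x.1 = y.1 ∧ x.2.1 = y.2.1 ∧ x.2.2 ≠ y.2.2)
  symm := .mk <| by
    rintro x y (⟨h1, h2⟩ | ⟨h1, h2, h3⟩ | ⟨h1, h2, h3⟩)
    · exact Or.inl ⟨h1.symm, h2.symm⟩
    · exact Or.inr (Or.inl ⟨h1.symm, h2.symm, h3.symm⟩)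
    · exact Or.inr (Or.inr ⟨h1.symm, h2.symm, h3.symm⟩)
  loopless := .mk <| by
    rintro x (⟨h, -⟩ | ⟨-, h, -⟩ | ⟨-, -, h⟩) <;> exact h rfl

/-- The Wagner graph `V₈`: the 8-cycle plus the four main diagonals. -/
def V8 : SimpleGraph (Fin 8) where
  Adj a b := a ≠ b ∧ (b = a + 1 ∨ a = b + 1 ∨ b = a + 4)
  symm := .mk <| by
    rintro a b ⟨h, h1 | h1 | h1⟩
    · exact ⟨h.symm, Or.inr (Or.inl h1)⟩
    · exact ⟨h.symm, Or.inl h1⟩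
    · refine ⟨h.symm, Or.inr (Or.inr ?_)⟩
      subst h1
      have h4 : (4 : Fin 8) + 4 = 0 := by decide
      rw [add_assoc, h4, add_zero]
  loopless := .mk <| by rintro a ⟨h, -⟩; exact h rfl

/-- `K₆` minus a perfect matching (`K₆^≡`), i.e. the octahedron `K_{2,2,2}`. -/
def K6mm3 : SimpleGraph (Fin 6) where
  Adj a b := a.val % 3 ≠ b.val % 3
  symm := ⟨fun _ _ h => h.symm⟩
  loopless := ⟨fun _ h => h rfl⟩

/-- `K₆` minus a matching of size two (`K₆^=`). -/
def K6mm2 : SimpleGraph (Fin 6) where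
  Adj a b := a ≠ b ∧ ¬(({a, b} : Finset (Fin 6)) = {0, 3}) ∧
    ¬(({a, b} : Finset (Fin 6)) = {1, 4})
  symm := .mk <| by
    rintro a b ⟨h1, h2, h3⟩
    refine ⟨h1.symm, ?_, ?_⟩ <;> rwa [Finset.pair_comm]
  loopless := ⟨fun a h => h.1 rfl⟩

/-- The join of the complement of `C₆` with a single vertex. -/
def C6cK1 : SimpleGraph (Fin 6 ⊕ Fin 1) :=
  joinG ((SimpleGraph.cycleGraph 6)ᶜ) (⊥ : SimpleGraph (Fin 1))

/-- A perfect matching graph on `Fin m` (`m` even): `2i` is matched to `2i+1`. -/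
def matchingGraph (m : ℕ) : SimpleGraph (Fin m) where
  Adj a b := a ≠ b ∧ a.val / 2 = b.val / 2
  symm := ⟨fun _ _ h => ⟨h.1.symm, h.2.symm⟩⟩
  loopless := ⟨fun _ h => h.1 rfl⟩

/-- The `m × n` grid graph. -/
def gridGraph (m n : ℕ) : SimpleGraph (Fin m × Fin n) where
  Adj p q := (p.1 = q.1 ∧ (p.2.val + 1 = q.2.val ∨ q.2.val + 1 = p.2.val)) ∨
    (p.2 = q.2 ∧ (p.1.val + 1 = q.1.val ∨ q.1.val + 1 = p.1.val))
  symm := .mk <| by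
    rintro p q (⟨h1, h2⟩ | ⟨h1, h2⟩)
    · exact Or.inl ⟨h1.symm, h2.symm⟩
    · exact Or.inr ⟨h1.symm, h2.symm⟩
  loopless := .mk <| by rintro p (⟨-, h | h⟩ | ⟨-, h | h⟩) <;> omega

/-! ### `(Δ,Y)`-operation -/

/-- The `(Δ,Y)`-operation on the triangle `{x,y,z}` of `G`: delete the edges of the triangle
and add a new vertex (`none`) adjacent exactly to `x`, `y`, `z`. -/
def deltaY {α : Type*} (G : SimpleGraph α) (x y z : α) : SimpleGraph (Option α) where
  Adj a b :=
    match a, b with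
    | some a, some b => G.Adj a b ∧ ¬((a = x ∨ a = y ∨ a = z) ∧ (b = x ∨ b = y ∨ b = z))
    | some a, none => a = x ∨ a = y ∨ a = z
    | none, some b => b = x ∨ b = y ∨ b = z
    | none, none => False
  symm := .mk <| by
    rintro (_ | a) (_ | b) h
    · exact h.elim
    · exact h
    · exact h
    · exact ⟨h.1.symm, fun hc => h.2 ⟨hc.2, hc.1⟩⟩
  loopless := .mk <| by
    rintro (_ | a) h
    · exact h
    · exact G.loopless.irrefl a h.1

/-- `G` has a spanning subgraph isomorphic to a member of
`𝓕₃ = {K₆⁻, C₇ᶜ, C₅ + K₂ᶜ, K_{3,1̂,3}, Q₃, V₈}`. -/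
def HasSpanningF3 {α : Type*} (G : SimpleGraph α) : Prop :=
  ∃ H : SimpleGraph α, H ≤ G ∧
    (Nonempty (H ≃g K6minus) ∨ Nonempty (H ≃g C7c) ∨ Nonempty (H ≃g C5K2c) ∨
      Nonempty (H ≃g K313hat) ∨ Nonempty (H ≃g Q3) ∨ Nonempty (H ≃g V8))

/-- `G` has a minor in `𝓕₃`. -/
def HasF3Minor {α : Type*} (G : SimpleGraph α) : Prop :=
  IsMinor K6minus G ∨ IsMinor C7c G ∨ IsMinor C5K2c G ∨ IsMinor K313hat G ∨
    IsMinor Q3 G ∨ IsMinor V8 G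

/-! ### Subdivisions -/

/-- Vertices of the subdivision of `G` in which the edge `ab` (with `a < b`) receives
`ℓ a b` internal (subdivision) vertices: the original vertices plus, for each oriented edge,
`ℓ a b` new vertices. -/
def SubdivVert {α : Type*} [LT α] (G : SimpleGraph α) (ℓ : α → α → ℕ) : Type _ :=
  α ⊕ Σ e : {p : α × α // p.1 < p.2 ∧ G.Adj p.1 p.2}, Fin (ℓ e.1.1 e.1.2)

noncomputable instance SubdivVert.instFintype {α : Type*} [LT α] [Fintype α]
    (G : SimpleGraph α) (ℓ : α → α → ℕ) : Fintype (SubdivVert G ℓ) := by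
  classical
  unfold SubdivVert
  infer_instance

noncomputable instance SubdivVert.instDecidableEq {α : Type*} [LT α] [DecidableEq α]
    (G : SimpleGraph α) (ℓ : α → α → ℕ) : DecidableEq (SubdivVert G ℓ) := by
  classical
  unfold SubdivVert
  infer_instance

/-- The subdivision of `G` in which each edge `ab` (`a < b`) is replaced by a path with
`ℓ a b` internal vertices (so of length `ℓ a b + 1`); an edge with `ℓ a b = 0` stays an edge. -/
def Subdiv {α : Type*} [LT α] (G : SimpleGraph α) (ℓ : α → α → ℕ) :
    SimpleGraph (SubdivVert G ℓ) where
  Adj x y :=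
    match x, y with
    | Sum.inl a, Sum.inl b =>
        G.Adj a b ∧ ((a < b ∧ ℓ a b = 0) ∨ (b < a ∧ ℓ b a = 0))
    | Sum.inl a, Sum.inr ei =>
        (a = ei.1.1.1 ∧ (ei.2 : ℕ) = 0) ∨ (a = ei.1.1.2 ∧ (ei.2 : ℕ) + 1 = ℓ ei.1.1.1 ei.1.1.2)
    | Sum.inr ei, Sum.inl a =>
        (a = ei.1.1.1 ∧ (ei.2 : ℕ) = 0) ∨ (a = ei.1.1.2 ∧ (ei.2 : ℕ) + 1 = ℓ ei.1.1.1 ei.1.1.2)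
    | Sum.inr ei, Sum.inr ej =>
        ei.1 = ej.1 ∧ ((ei.2 : ℕ) + 1 = (ej.2 : ℕ) ∨ (ej.2 : ℕ) + 1 = (ei.2 : ℕ))
  symm := .mk <| by
    rintro (a | ei) (b | ej) h
    · exact ⟨h.1.symm, h.2.symm⟩
    · exact h
    · exact h
    · exact ⟨h.1.symm, h.2.symm⟩
  loopless := .mk <| by
    rintro (a | ei) h
    · exact G.loopless.irrefl a h.1
    · rcases h.2 with h' | h' <;> omega

/-- Lexicographic order on the vertex set of a grid, used to orient its edges. -/
def lexLT {m n : ℕ} : LT (Fin m × Fin n) :=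
  ⟨fun p q => p.1 < q.1 ∨ (p.1 = q.1 ∧ p.2 < q.2)⟩



section Aux

open Relation

variable {V : Type*} [DecidableEq V]

/-- A generic "first failure" extraction along a refl-trans chain. -/
lemma firstFail {R : V → V → Prop} {P : V → Prop} {a b : V}
    (h : Relation.ReflTransGen R a b) (ha : P a) (hb : ¬ P b) :
    ∃ x y, Relation.ReflTransGen R a x ∧ R x y ∧ P x ∧ ¬ P y := by
  induction h with
  | refl => exact absurd ha hb
  | tail hac hcb ih =>
    rename_i c cc
    by_cases hc : P c
    · exact ⟨c, cc, hac, hcb, hc, hb⟩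
    · exact ih hc

/-- Partition invariant: covering and pairwise disjoint. -/
def Inv (PP : Finset (Finset V)) : Prop :=
  (∀ x : V, ∃ Q ∈ PP, x ∈ Q) ∧
  (∀ Q ∈ PP, ∀ Q' ∈ PP, Q ≠ Q' → Disjoint Q Q')

lemma Inv.merge {PP QQ : Finset (Finset V)} (h : Inv PP) (hm : Merge PP QQ) : Inv QQ := by
  obtain ⟨A, hA, B, hB, hAB, rfl⟩ := hm
  obtain ⟨hcov, hdisj⟩ := h
  constructor
  · intro x
    obtain ⟨Q, hQ, hxQ⟩ := hcov x
    by_cases hQA : Q = A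
    · exact ⟨A ∪ B, Finset.mem_insert_self _ _, Finset.mem_union_left _ (hQA ▸ hxQ)⟩
    by_cases hQB : Q = B
    · exact ⟨A ∪ B, Finset.mem_insert_self _ _, Finset.mem_union_right _ (hQB ▸ hxQ)⟩
    · exact ⟨Q, Finset.mem_insert_of_mem (Finset.mem_erase.2 ⟨hQB, Finset.mem_erase.2 ⟨hQA, hQ⟩⟩), hxQ⟩
  · have hmem : ∀ Q ∈ (PP.erase A).erase B, Q ∈ PP ∧ Q ≠ A ∧ Q ≠ B := by
      intro Q hQ
      rw [Finset.mem_erase, Finset.mem_erase] at hQ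
      exact ⟨hQ.2.2, hQ.2.1, hQ.1⟩
    intro Q hQ Q' hQ' hne
    rcases Finset.mem_insert.1 hQ with rfl | hQ <;>
      rcases Finset.mem_insert.1 hQ' with rfl | hQ'
    · exact absurd rfl hne
    · obtain ⟨h1, h2, h3⟩ := hmem _ hQ'
      exact Finset.disjoint_union_left.2 ⟨hdisj _ hA _ h1 (Ne.symm h2), hdisj _ hB _ h1 (Ne.symm h3)⟩
    · obtain ⟨h1, h2, h3⟩ := hmem _ hQ
      exact Finset.disjoint_union_right.2 ⟨hdisj _ h1 _ hA h2, hdisj _ h1 _ hB h3⟩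
    · exact hdisj _ (hmem _ hQ).1 _ (hmem _ hQ').1 hne

lemma Inv.start [Fintype V] : Inv (Finset.univ.image fun v => ({v} : Finset V)) := by
  constructor
  · intro x
    exact ⟨{x}, Finset.mem_image_of_mem _ (Finset.mem_univ x), Finset.mem_singleton_self x⟩
  · intro Q hQ Q' hQ' hne
    obtain ⟨a, -, rfl⟩ := Finset.mem_image.1 hQ
    obtain ⟨b, -, rfl⟩ := Finset.mem_image.1 hQ'
    simp only [Finset.disjoint_singleton_left, Finset.mem_singleton]
    intro h; exact hne (by rw [h])

lemma Inv.reach {G : SimpleGraph V} {d : ℕ} {PP QQ : Finset (Finset V)} (h : Inv PP)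
    (hr : Relation.ReflTransGen (Step G d) PP QQ) : Inv QQ := by
  induction hr with
  | refl => exact h
  | tail _ hstep ih => exact ih.merge hstep.1

lemma redDeg_le_card {G : SimpleGraph V} (PP : Finset (Finset V)) (P : Finset V) :
    redDeg G PP P ≤ PP.card := by
  have : {Q | Q ∈ PP ∧ Q ≠ P ∧ ¬ Pure G P Q} ⊆ (PP : Set (Finset V)) := fun Q hQ => hQ.1
  calc redDeg G PP P ≤ (PP : Set (Finset V)).ncard :=
        Set.ncard_le_ncard this (PP.finite_toSet)
    _ = PP.card := Set.ncard_coe_finset _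

/-- Any graph admits a contraction sequence with red degrees at most `|V|`. -/
lemma exists_seq [Fintype V] [Nonempty V] (G : SimpleGraph V) : TwwLE G (Fintype.card V) := by
  classical
  set D := Fintype.card V with hD
  have main : ∀ N (PP : Finset (Finset V)), PP.card ≤ N → (∀ x : V, ∃ Q ∈ PP, x ∈ Q) →
      PP.card ≤ D → Relation.ReflTransGen (Step G D) PP {Finset.univ} := by
    intro N
    induction N with
    | zero =>
      intro PP hc hcov _
      obtain ⟨Q, hQ, -⟩ := hcov (Classical.arbitrary V)
      rw [Nat.le_zero, Finset.card_eq_zero] at hc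
      simp [hc] at hQ
    | succ N ih =>
      intro PP hc hcov hcD
      by_cases h1 : PP.card ≤ 1
      · interval_cases h : PP.card
        · obtain ⟨Q, hQ, -⟩ := hcov (Classical.arbitrary V)
          rw [Finset.card_eq_zero] at h
          simp [h] at hQ
        · obtain ⟨A, rfl⟩ := Finset.card_eq_one.1 h
          have : A = Finset.univ := by
            apply Finset.eq_univ_of_forall
            intro x
            obtain ⟨Q, hQ, hx⟩ := hcov x
            rw [Finset.mem_singleton] at hQ
            exact hQ ▸ hx
          rw [this]
      · push_neg at h1
        obtain ⟨A, hA, B, hB, hAB⟩ := Finset.one_lt_card.1 h1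
        set QQ := insert (A ∪ B) ((PP.erase A).erase B) with hQQ
        have hcard : QQ.card ≤ PP.card - 1 := by
          have h2 : ((PP.erase A).erase B).card = PP.card - 2 := by
            rw [Finset.card_erase_of_mem (Finset.mem_erase.2 ⟨Ne.symm hAB, hB⟩),
              Finset.card_erase_of_mem hA]
            omega
          calc QQ.card ≤ ((PP.erase A).erase B).card + 1 := Finset.card_insert_le _ _
            _ ≤ PP.card - 1 := by omega
        have hstep : Step G D PP QQ := by
          refine ⟨⟨A, hA, B, hB, hAB, rfl⟩, ?_⟩
          intro P hP
          calc redDeg G QQ P ≤ QQ.card := redDeg_le_card _ _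
            _ ≤ D := by omega
        have hcov' : ∀ x : V, ∃ Q ∈ QQ, x ∈ Q := by
          intro x
          obtain ⟨Q, hQ, hxQ⟩ := hcov x
          by_cases hQA : Q = A
          · exact ⟨A ∪ B, Finset.mem_insert_self _ _, Finset.mem_union_left _ (hQA ▸ hxQ)⟩
          by_cases hQB : Q = B
          · exact ⟨A ∪ B, Finset.mem_insert_self _ _, Finset.mem_union_right _ (hQB ▸ hxQ)⟩
          · exact ⟨Q, Finset.mem_insert_of_mem (Finset.mem_erase.2 ⟨hQB, Finset.mem_erase.2 ⟨hQA, hQ⟩⟩), hxQ⟩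
        exact Relation.ReflTransGen.head hstep (ih QQ (by omega) hcov' (by omega))
  have hstart : (Finset.univ.image fun v => ({v} : Finset V)).card ≤ D := by
    apply le_trans (Finset.card_image_le)
    simp [hD]
  exact main _ _ le_rfl (fun x => ⟨{x}, Finset.mem_image_of_mem _ (Finset.mem_univ x), Finset.mem_singleton_self x⟩) hstart

end Aux

section RedBall

variable {V : Type*} [DecidableEq V]

/-- The red neighbourhood of a part, as a `Finset`. -/
noncomputable def RN (G : SimpleGraph V) (PP : Finset (Finset V)) (Q : Finset V) :
    Finset (Finset V) :=
  @Finset.filter _ (fun Q' => Q' ≠ Q ∧ ¬ Pure G Q Q') (Classical.decPred _) PP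

lemma mem_RN {G : SimpleGraph V} {PP : Finset (Finset V)} {Q Q' : Finset V} :
    Q' ∈ RN G PP Q ↔ Q' ∈ PP ∧ Q' ≠ Q ∧ ¬ Pure G Q Q' :=
  @Finset.mem_filter _ _ (Classical.decPred _) PP Q' 

lemma RN_card {G : SimpleGraph V} (PP : Finset (Finset V)) (Q : Finset V) :
    (RN G PP Q).card = redDeg G PP Q := by
  rw [redDeg]
  have : {Q' | Q' ∈ PP ∧ Q' ≠ Q ∧ ¬ Pure G Q Q'} = ((RN G PP Q : Finset (Finset V)) : Set (Finset V)) := by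
    ext Q'
    simp only [Set.mem_setOf_eq, Finset.coe_mem, Finset.mem_coe, mem_RN]
  rw [this, Set.ncard_coe_finset]

/-- Iterated red balls. -/
noncomputable def Tset (G : SimpleGraph V) (PP : Finset (Finset V)) (P : Finset V) :
    ℕ → Finset (Finset V)
  | 0 => {P}
  | i + 1 => Tset G PP P i ∪ (Tset G PP P i).biUnion (RN G PP)

lemma Tset_subset {G : SimpleGraph V} {PP : Finset (Finset V)} {P : Finset V} (hP : P ∈ PP) :
    ∀ i, Tset G PP P i ⊆ PP := by
  intro i
  induction i with
  | zero => simpa [Tset] using hP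
  | succ i ih =>
    rw [Tset]
    apply Finset.union_subset ih
    intro Q hQ
    obtain ⟨R, -, hR⟩ := Finset.mem_biUnion.1 hQ
    exact (mem_RN.1 hR).1

lemma Tset_mono {G : SimpleGraph V} {PP : Finset (Finset V)} {P : Finset V} {i j : ℕ}
    (h : i ≤ j) : Tset G PP P i ⊆ Tset G PP P j := by
  induction j with
  | zero => rw [Nat.le_zero.1 h]
  | succ j ih =>
    rcases Nat.eq_or_lt_of_le h with rfl | h'
    · rfl
    · exact (ih (Nat.lt_succ_iff.1 h')).trans (by rw [Tset]; exact Finset.subset_union_left)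

lemma Tset_succ_mem {G : SimpleGraph V} {PP : Finset (Finset V)} {P Q Q' : Finset V} {i : ℕ}
    (hQ : Q ∈ Tset G PP P i) (hQ' : Q' ∈ RN G PP Q) : Q' ∈ Tset G PP P (i + 1) := by
  rw [Tset]
  exact Finset.mem_union_right _ (Finset.mem_biUnion.2 ⟨Q, hQ, hQ'⟩)

lemma Tset_card {G : SimpleGraph V} {PP : Finset (Finset V)} {P : Finset V} {d : ℕ}
    (hd : 1 ≤ d) (hred : ∀ Q ∈ PP, redDeg G PP Q ≤ d - 1) (hP : P ∈ PP) :
    ∀ i, (Tset G PP P i).card ≤ d ^ i := by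
  intro i
  induction i with
  | zero => simp [Tset]
  | succ i ih =>
    rw [Tset]
    calc (Tset G PP P i ∪ (Tset G PP P i).biUnion (RN G PP)).card
        ≤ (Tset G PP P i).card + ((Tset G PP P i).biUnion (RN G PP)).card :=
          Finset.card_union_le _ _
      _ ≤ (Tset G PP P i).card + (Tset G PP P i).card * (d - 1) := by
          gcongr
          calc ((Tset G PP P i).biUnion (RN G PP)).card
              ≤ ∑ Q ∈ Tset G PP P i, (RN G PP Q).card := Finset.card_biUnion_le
            _ ≤ ∑ _Q ∈ Tset G PP P i, (d - 1) := by
                apply Finset.sum_le_sum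
                intro Q hQ
                rw [RN_card]
                exact hred Q (Tset_subset hP i hQ)
            _ = (Tset G PP P i).card * (d - 1) := by
                rw [Finset.sum_const, smul_eq_mul]
      _ ≤ d ^ i * d := by
          have h1 : 1 + (d - 1) = d := by omega
          calc (Tset G PP P i).card + (Tset G PP P i).card * (d - 1)
              = (Tset G PP P i).card * (1 + (d - 1)) := by ring
            _ = (Tset G PP P i).card * d := by rw [h1]
            _ ≤ d ^ i * d := Nat.mul_le_mul_right d ih
      _ = d ^ (i + 1) := by ring

end RedBall




section Path

variable {n k : ℕ}

abbrev SG (n k : ℕ) : SimpleGraph (SubdivVert (⊤ : SimpleGraph (Fin n)) (fun _ _ => k)) :=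
  Subdiv (⊤ : SimpleGraph (Fin n)) (fun _ _ => k)

def epair (u w : Fin n) (h : u < w) :
    {p : Fin n × Fin n // p.1 < p.2 ∧ (⊤ : SimpleGraph (Fin n)).Adj p.1 p.2} :=
  ⟨(u, w), h, by simpa using h.ne⟩

/-- The `j`-th vertex on the subdivided path from `u` to `w` (`j = 0` is `u`,
`j = k+1` is `w`). -/
def pv (k : ℕ) (u w : Fin n) (j : ℕ) : SubdivVert (⊤ : SimpleGraph (Fin n)) (fun _ _ => k) :=
  if h0 : j = 0 then Sum.inl u
  else if hk2 : k + 1 ≤ j then Sum.inl w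
  else if h : u < w then Sum.inr ⟨epair u w h, ⟨j - 1, by show j - 1 < k; omega⟩⟩
  else if h' : w < u then Sum.inr ⟨epair w u h', ⟨k - j, by show k - j < k; omega⟩⟩
  else Sum.inl u

lemma pv_zero (u w : Fin n) : pv k u w 0 = Sum.inl u := by simp [pv]; rfl

lemma pv_last (u w : Fin n) : pv k u w (k + 1) = Sum.inl w := by
  unfold pv
  exact (dif_neg (by omega)).trans (dif_pos (le_refl _))

lemma pv_mid {u w : Fin n} (h : u < w) {j : ℕ} (hj1 : 1 ≤ j) (hjk : j ≤ k) (hlt : j - 1 < k) :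
    pv k u w j = Sum.inr ⟨epair u w h, ⟨j - 1, hlt⟩⟩ := by
  unfold pv
  exact (dif_neg (by omega)).trans ((dif_neg (by omega)).trans (dif_pos h))

lemma pv_mid' {u w : Fin n} (h : w < u) {j : ℕ} (hj1 : 1 ≤ j) (hjk : j ≤ k) (hlt : k - j < k) :
    pv k u w j = Sum.inr ⟨epair w u h, ⟨k - j, hlt⟩⟩ := by
  unfold pv
  exact (dif_neg (by omega)).trans ((dif_neg (by omega)).trans ((dif_neg (lt_asymm h)).trans (dif_pos h)))

lemma sum_sigma_eq {E : {p : Fin n × Fin n // p.1 < p.2 ∧ (⊤ : SimpleGraph (Fin n)).Adj p.1 p.2}}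
    {i i' : Fin k} (h : (i : ℕ) = (i' : ℕ)) :
    (Sum.inr ⟨E, i⟩ : SubdivVert (⊤ : SimpleGraph (Fin n)) (fun _ _ => k)) = Sum.inr ⟨E, i'⟩ := by
  congr 1
  exact congrArg _ (Fin.ext h)

lemma pv_swap {u w : Fin n} (hne : u ≠ w) {j : ℕ} (hj : j ≤ k + 1) :
    pv k u w j = pv k w u (k + 1 - j) := by
  rcases Nat.eq_zero_or_pos j with rfl | hj1
  · rw [pv_zero, Nat.sub_zero, pv_last]
  rcases Nat.eq_or_lt_of_le hj with rfl | hjk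
  · rw [pv_last, Nat.sub_self, pv_zero]
  have hjk' : j ≤ k := by omega
  rcases lt_or_gt_of_ne hne with h | h
  · rw [pv_mid h hj1 hjk' (by omega), pv_mid' h (by omega) (by omega) (by omega)]
    exact sum_sigma_eq (show j - 1 = k - (k + 1 - j) by omega)
  · rw [pv_mid' h hj1 hjk' (by omega), pv_mid h (by omega) (by omega) (by omega)]
    exact sum_sigma_eq (show k - j = (k + 1 - j) - 1 by omega)

lemma subdiv_adj_inl_inl {a b : Fin n} :
    (SG n k).Adj (Sum.inl a) (Sum.inl b) ↔
      ((⊤ : SimpleGraph (Fin n)).Adj a b ∧ ((a < b ∧ k = 0) ∨ (b < a ∧ k = 0))) := Iff.rfl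

lemma subdiv_adj_inl_inr {a : Fin n}
    {ei : Σ e : {p : Fin n × Fin n // p.1 < p.2 ∧ (⊤ : SimpleGraph (Fin n)).Adj p.1 p.2}, Fin k} :
    (SG n k).Adj (Sum.inl a) (Sum.inr ei) ↔
      ((a = ei.1.1.1 ∧ (ei.2 : ℕ) = 0) ∨ (a = ei.1.1.2 ∧ (ei.2 : ℕ) + 1 = k)) := Iff.rfl

lemma subdiv_adj_inr_inl {a : Fin n}
    {ei : Σ e : {p : Fin n × Fin n // p.1 < p.2 ∧ (⊤ : SimpleGraph (Fin n)).Adj p.1 p.2}, Fin k} :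
    (SG n k).Adj (Sum.inr ei) (Sum.inl a) ↔
      ((a = ei.1.1.1 ∧ (ei.2 : ℕ) = 0) ∨ (a = ei.1.1.2 ∧ (ei.2 : ℕ) + 1 = k)) := Iff.rfl

lemma subdiv_adj_inr_inr
    {ei ej : Σ e : {p : Fin n × Fin n // p.1 < p.2 ∧ (⊤ : SimpleGraph (Fin n)).Adj p.1 p.2}, Fin k} :
    (SG n k).Adj (Sum.inr ei) (Sum.inr ej) ↔
      (ei.1 = ej.1 ∧ ((ei.2 : ℕ) + 1 = (ej.2 : ℕ) ∨ (ej.2 : ℕ) + 1 = (ei.2 : ℕ))) := Iff.rfl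

lemma no_inl_adj (hk : 1 ≤ k) {a b : Fin n} : ¬ (SG n k).Adj (Sum.inl a) (Sum.inl b) := by
  rw [subdiv_adj_inl_inl]
  rintro ⟨-, ⟨-, h⟩ | ⟨-, h⟩⟩ <;> omega

/-- Characterization of the neighbours of an internal path vertex, case `u < w`. -/
lemma adj_pv_iff_lt (hk : 1 ≤ k) {u w : Fin n} (h : u < w) {j : ℕ} (hj1 : 1 ≤ j) (hjk : j ≤ k)
    (z : SubdivVert (⊤ : SimpleGraph (Fin n)) (fun _ _ => k)) :
    (SG n k).Adj z (pv k u w j) ↔ z = pv k u w (j - 1) ∨ z = pv k u w (j + 1) := by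
  rw [pv_mid h hj1 hjk (by omega)]
  constructor
  · intro hadj
    match z with
    | Sum.inl a =>
      rw [subdiv_adj_inl_inr] at hadj
      rcases hadj with ⟨ha, h2⟩ | ⟨ha, h2⟩
      · have h3 : j - 1 = 0 := h2
        have ha' : a = u := ha
        subst ha'
        left
        rw [h3, pv_zero]
      · have h3 : (j - 1) + 1 = k := h2
        have ha' : a = w := ha
        subst ha'
        right
        rw [show j + 1 = k + 1 by omega, pv_last]
    | Sum.inr ei =>
      rw [subdiv_adj_inr_inr] at hadj
      obtain ⟨hE, hi⟩ := hadj
      obtain ⟨E, i⟩ := ei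
      have hE' : E = epair u w h := hE
      subst hE'
      have hi' : (i : ℕ) + 1 = j - 1 ∨ (j - 1) + 1 = (i : ℕ) := hi
      have hik : (i : ℕ) < k := i.isLt
      rcases hi' with hi2 | hi2
      · left
        rw [pv_mid h (by omega) (by omega) (by omega)]
        exact sum_sigma_eq (show (i : ℕ) = j - 1 - 1 by omega)
      · right
        rw [pv_mid h (by omega) (by omega) (by omega)]
        exact sum_sigma_eq (show (i : ℕ) = j + 1 - 1 by omega)
  · intro hz
    rcases hz with rfl | rfl
    · rcases Nat.eq_or_lt_of_le hj1 with hq | hj2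
      · have h0 : pv k u w (j - 1) = Sum.inl u := by
          rw [(show j - 1 = 0 by omega), pv_zero]
        rw [h0, subdiv_adj_inl_inr]
        left
        exact ⟨rfl, show j - 1 = 0 by omega⟩
      · rw [pv_mid h (by omega) (by omega) (by omega), subdiv_adj_inr_inr]
        exact ⟨rfl, Or.inl (show (j - 1 - 1) + 1 = j - 1 by omega)⟩
    · rcases Nat.eq_or_lt_of_le hjk with hq | hjk2
      · rw [show j + 1 = k + 1 by omega, pv_last, subdiv_adj_inl_inr]
        right
        exact ⟨rfl, show (j - 1) + 1 = k by omega⟩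
      · rw [pv_mid h (by omega) (by omega) (by omega), subdiv_adj_inr_inr]
        exact ⟨rfl, Or.inr (show (j - 1) + 1 = j + 1 - 1 by omega)⟩

/-- Characterization of the neighbours of an internal path vertex. -/
lemma adj_pv_iff (hk : 1 ≤ k) {u w : Fin n} (hne : u ≠ w) {j : ℕ} (hj1 : 1 ≤ j) (hjk : j ≤ k)
    (z : SubdivVert (⊤ : SimpleGraph (Fin n)) (fun _ _ => k)) :
    (SG n k).Adj z (pv k u w j) ↔ z = pv k u w (j - 1) ∨ z = pv k u w (j + 1) := by
  rcases lt_or_gt_of_ne hne with h | h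
  · exact adj_pv_iff_lt hk h hj1 hjk z
  · rw [pv_swap hne (show j ≤ k + 1 by omega),
      pv_swap hne (show j - 1 ≤ k + 1 by omega), pv_swap hne (show j + 1 ≤ k + 1 by omega),
      (show k + 1 - (j - 1) = (k + 1 - j) + 1 by omega),
      (show k + 1 - (j + 1) = (k + 1 - j) - 1 by omega),
      adj_pv_iff_lt hk h (by omega) (by omega) z]
    exact or_comm

lemma pv_chain (hk : 1 ≤ k) {u w : Fin n} (hne : u ≠ w) {j : ℕ} (hj : j ≤ k) :
    (SG n k).Adj (pv k u w j) (pv k u w (j + 1)) := by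
  rcases Nat.eq_zero_or_pos j with rfl | hj1
  · exact (adj_pv_iff hk hne le_rfl hk (pv k u w 0)).2
      (Or.inl (show pv k u w 0 = pv k u w (1 - 1) from rfl))
  · exact ((adj_pv_iff hk hne hj1 hj (pv k u w (j + 1))).2 (Or.inr rfl)).symm

lemma pv_ne_inl {u w : Fin n} (hne : u ≠ w) {j : ℕ} (hj1 : 1 ≤ j) (hjk : j ≤ k) (a : Fin n) :
    pv k u w j ≠ Sum.inl a := by
  rcases lt_or_gt_of_ne hne with h | h
  · rw [pv_mid h hj1 hjk (by omega)]; exact Sum.inr_ne_inl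
  · rw [pv_mid' h hj1 hjk (by omega)]; exact Sum.inr_ne_inl

lemma inl_eq_pv {u w a : Fin n} (hne : u ≠ w) {m : ℕ} (hm : m ≤ k + 1)
    (h : Sum.inl a = pv k u w m) : (m = 0 ∧ a = u) ∨ (m = k + 1 ∧ a = w) := by
  rcases Nat.eq_zero_or_pos m with rfl | h1
  · rw [pv_zero] at h
    exact Or.inl ⟨rfl, Sum.inl.inj h⟩
  rcases Nat.eq_or_lt_of_le hm with hq | h2
  · rw [hq, pv_last] at h
    exact Or.inr ⟨hq, Sum.inl.inj h⟩
  · exact absurd h.symm (pv_ne_inl hne h1 (by omega) a)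

lemma epair_inj {x y x' y' : Fin n} (hxy : x < y) (hxy' : x' < y')
    (h : epair x y hxy = epair x' y' hxy') : x = x' ∧ y = y' := by
  have := congrArg (fun s => s.1) h
  simp only [epair] at this
  exact ⟨congrArg Prod.fst this, congrArg Prod.snd this⟩

/-- Internal vertices of distinct paths from `u` are distinct. -/
lemma pv_cross {u w w' : Fin n} (hw : w ≠ u) (hw' : w' ≠ u) (hww' : w ≠ w')
    {m m' : ℕ} (hm1 : 1 ≤ m) (hmk : m ≤ k) (hm1' : 1 ≤ m') (hmk' : m' ≤ k)
    (hcon : pv k u w m = pv k u w' m') : False := by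
  have key : ∀ (x y : Fin n) (hx : x < y) (i : Fin k) (x' y' : Fin n) (hx' : x' < y')
      (i' : Fin k),
      (Sum.inr ⟨epair x y hx, i⟩ : SubdivVert (⊤ : SimpleGraph (Fin n)) (fun _ _ => k)) =
        Sum.inr ⟨epair x' y' hx', i'⟩ → x = x' ∧ y = y' := by
    intro x y hx i x' y' hx' i' hcon2
    have h2 := Sum.inr.inj hcon2
    have h3 : (⟨epair x y hx, i⟩ :
        Σ e : {p : Fin n × Fin n // p.1 < p.2 ∧ (⊤ : SimpleGraph (Fin n)).Adj p.1 p.2},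
          Fin k).1 = (⟨epair x' y' hx', i'⟩ :
        Σ e : {p : Fin n × Fin n // p.1 < p.2 ∧ (⊤ : SimpleGraph (Fin n)).Adj p.1 p.2},
          Fin k).1 := congrArg Sigma.fst h2
    exact epair_inj hx hx' h3
  rcases lt_or_gt_of_ne (Ne.symm hw) with h | h <;>
    rcases lt_or_gt_of_ne (Ne.symm hw') with h' | h'
  · rw [pv_mid h hm1 hmk (by omega), pv_mid h' hm1' hmk' (by omega)] at hcon
    obtain ⟨-, h2⟩ := key _ _ _ _ _ _ _ _ hcon
    exact hww' h2
  · rw [pv_mid h hm1 hmk (by omega), pv_mid' h' hm1' hmk' (by omega)] at hcon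
    obtain ⟨h1, -⟩ := key _ _ _ _ _ _ _ _ hcon
    exact hw' h1.symm
  · rw [pv_mid' h hm1 hmk (by omega), pv_mid h' hm1' hmk' (by omega)] at hcon
    obtain ⟨h1, -⟩ := key _ _ _ _ _ _ _ _ hcon
    exact hw h1
  · rw [pv_mid' h hm1 hmk (by omega), pv_mid' h' hm1' hmk' (by omega)] at hcon
    obtain ⟨h1, -⟩ := key _ _ _ _ _ _ _ _ hcon
    exact hww' h1

/-- Fact 2a: a branch vertex `v ∉ {u,w}` is not adjacent to any vertex of the `u`–`w` path. -/
lemma branch_not_adj (hk : 1 ≤ k) {u w v : Fin n} (hne : u ≠ w) (hvu : v ≠ u) (hvw : v ≠ w)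
    {j : ℕ} (hj1 : 1 ≤ j) (hj : j ≤ k + 1) :
    ¬ (SG n k).Adj (Sum.inl v) (pv k u w j) := by
  rcases Nat.eq_or_lt_of_le hj with hq | hjk
  · rw [hq, pv_last]; exact no_inl_adj hk
  intro hadj
  rcases (adj_pv_iff hk hne hj1 (by omega) _).1 hadj with h1 | h1
  · rcases inl_eq_pv hne (by omega) h1 with ⟨-, h2⟩ | ⟨h2, -⟩
    · exact hvu h2
    · omega
  · rcases inl_eq_pv hne (by omega) h1 with ⟨h2, -⟩ | ⟨-, h2⟩
    · omega
    · exact hvw h2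

/-- Fact 2b: `u` is not adjacent to path vertices at positions `≥ 2`. -/
lemma base_not_adj (hk : 1 ≤ k) {u w : Fin n} (hne : u ≠ w) {j : ℕ} (hj2 : 2 ≤ j)
    (hj : j ≤ k + 1) : ¬ (SG n k).Adj (Sum.inl u) (pv k u w j) := by
  rcases Nat.eq_or_lt_of_le hj with hq | hjk
  · rw [hq, pv_last]; exact no_inl_adj hk
  intro hadj
  rcases (adj_pv_iff hk hne (by omega) (by omega) _).1 hadj with h1 | h1
  · rcases inl_eq_pv hne (by omega) h1 with ⟨h2, -⟩ | ⟨h2, -⟩ <;> omega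
  · rcases inl_eq_pv hne (by omega) h1 with ⟨h2, -⟩ | ⟨-, h2⟩
    · omega
    · exact hne h2

/-- Fact 2c: internal vertices of another path `u`–`w'` are not adjacent to
vertices of the `u`–`w` path at positions `≥ 2`. -/
lemma cross_not_adj (hk : 1 ≤ k) {u w w' : Fin n} (hw : w ≠ u) (hw' : w' ≠ u) (hww' : w' ≠ w)
    {m j : ℕ} (hm1 : 1 ≤ m) (hmk : m ≤ k) (hj2 : 2 ≤ j) (hj : j ≤ k + 1) :
    ¬ (SG n k).Adj (pv k u w' m) (pv k u w j) := by
  intro hadj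
  by_cases hjq : j = k + 1
  · rw [hjq, pv_last] at hadj
    rcases (adj_pv_iff hk (Ne.symm hw') hm1 hmk _).1 hadj.symm with h1 | h1
    · rcases inl_eq_pv (Ne.symm hw') (by omega) h1 with ⟨-, h2⟩ | ⟨h2, -⟩
      · exact hw h2
      · omega
    · rcases inl_eq_pv (Ne.symm hw') (by omega) h1 with ⟨h2, -⟩ | ⟨-, h2⟩
      · omega
      · exact hww' h2.symm
  · have hjk : j ≤ k := by omega
    rcases (adj_pv_iff hk (Ne.symm hw) (by omega) hjk _).1 hadj with h1 | h1
    · exact pv_cross hw' hw hww' hm1 hmk (by omega) (by omega) h1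
    · rcases Nat.eq_or_lt_of_le (show j + 1 ≤ k + 1 by omega) with h2 | h2
      · rw [h2, pv_last] at h1
        exact pv_ne_inl (Ne.symm hw') hm1 hmk w h1
      · exact pv_cross hw' hw hww' hm1 hmk (by omega) (by omega) h1

end Path


section Static

variable {n k d : ℕ} {β : Type*} [Fintype β] [DecidableEq β] {H : SimpleGraph β}

/-- The main counting argument: in a partition with all red degrees `≤ d-1` in which some part
`P` contains exactly the two branch vertices `u ≠ v` and all other parts contain at most one
branch vertex, we must have `n - 2 ≤ d^(k+1) - 1`. -/
lemma static (hd : 2 ≤ d) (hk : 1 ≤ k)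
    (e : SG n k ≃g H)
    (Prt : Finset (Finset β)) (hInv : Inv Prt)
    (hred : ∀ Q ∈ Prt, redDeg H Prt Q ≤ d - 1)
    (P : Finset β) (hP : P ∈ Prt) (u v : Fin n) (huv : u ≠ v)
    (hu : e (Sum.inl u) ∈ P) (hv : e (Sum.inl v) ∈ P)
    (hgood : ∀ Q ∈ Prt, Q ≠ P → ∀ a b : Fin n, e (Sum.inl a) ∈ Q → e (Sum.inl b) ∈ Q → a = b)
    (hPbr : ∀ a : Fin n, e (Sum.inl a) ∈ P → a = u ∨ a = v) :
    n - 2 ≤ d ^ (k + 1) - 1 := by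
  classical
  obtain ⟨hcov, hdisj⟩ := hInv
  -- the part containing a given vertex
  have hptex : ∀ x : β, ∃ Q, Q ∈ Prt ∧ x ∈ Q := by
    intro x; obtain ⟨Q, h1, h2⟩ := hcov x; exact ⟨Q, h1, h2⟩
  set pt : β → Finset β := fun x => (hptex x).choose with hpt
  have hpt1 : ∀ x, pt x ∈ Prt := fun x => (hptex x).choose_spec.1
  have hpt2 : ∀ x, x ∈ pt x := fun x => (hptex x).choose_spec.2
  set φ : SubdivVert (⊤ : SimpleGraph (Fin n)) (fun _ _ => k) → β := fun z => e z with hφ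
  have hφadj : ∀ x y, H.Adj (φ x) (φ y) ↔ (SG n k).Adj x y := fun x y => e.map_adj_iff
  have hφinj : Function.Injective φ := e.injective
  -- per-branch-vertex claim
  have claim : ∀ w : Fin n, w ≠ u → w ≠ v →
      ∃ R, R ∈ Tset H Prt P (k + 1) ∧
        ((φ (Sum.inl w) ∈ R) ∨
          ((∀ a : Fin n, φ (Sum.inl a) ∉ R) ∧
           (∃ m, 1 ≤ m ∧ m ≤ k ∧ φ (pv k u w m) ∈ R) ∧
           (∀ w' : Fin n, w' ≠ u →
             (∃ m, 1 ≤ m ∧ m ≤ k ∧ φ (pv k u w' m) ∈ R) → w' = w))) := by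
    intro w hwu hwv
    have hwne : u ≠ w := Ne.symm hwu
    have adv : ∀ m i j Q, j ≤ k + 1 → i ≤ j → Q ∈ Tset H Prt P i →
        φ (pv k u w j) ∈ Q → m = k + 1 - j →
        ∃ R, R ∈ Tset H Prt P (k + 1) ∧
          ((φ (Sum.inl w) ∈ R) ∨
            ((∀ a : Fin n, φ (Sum.inl a) ∉ R) ∧
             (∃ m', 1 ≤ m' ∧ m' ≤ k ∧ φ (pv k u w m') ∈ R) ∧
             (∀ w' : Fin n, w' ≠ u →
               (∃ m', 1 ≤ m' ∧ m' ≤ k ∧ φ (pv k u w' m') ∈ R) → w' = w))) := by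
      intro m
      induction m with
      | zero =>
        intro i j Q hj hij hQT hmem hm
        have hjq : j = k + 1 := by omega
        rw [hjq, pv_last] at hmem
        exact ⟨Q, Tset_mono (by omega) hQT, Or.inl hmem⟩
      | succ m ih =>
        intro i j Q hj hij hQT hmem hm
        by_cases hjtop : j = k + 1
        · rw [hjtop, pv_last] at hmem
          exact ⟨Q, Tset_mono (by omega) hQT, Or.inl hmem⟩
        have hjk : j ≤ k := by omega
        by_cases hnext : φ (pv k u w (j + 1)) ∈ Q
        · exact ih i (j + 1) Q (by omega) (by omega) hQT hnext (by omega)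
        by_cases hwin : φ (Sum.inl w) ∈ Q
        · exact ⟨Q, Tset_mono (by omega) hQT, Or.inl hwin⟩
        -- advancing through a red edge, given a non-adjacent witness in Q
        have advance : ∀ z, z ∈ Q → ¬ H.Adj z (φ (pv k u w (j + 1))) →
            ∃ R, R ∈ Tset H Prt P (k + 1) ∧
              ((φ (Sum.inl w) ∈ R) ∨
                ((∀ a : Fin n, φ (Sum.inl a) ∉ R) ∧
                 (∃ m', 1 ≤ m' ∧ m' ≤ k ∧ φ (pv k u w m') ∈ R) ∧
                 (∀ w' : Fin n, w' ≠ u →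
                   (∃ m', 1 ≤ m' ∧ m' ≤ k ∧ φ (pv k u w' m') ∈ R) → w' = w))) := by
          intro z hz hnadj
          have hpure : ¬ Pure H Q (pt (φ (pv k u w (j + 1)))) := by
            rintro (hcomp | hemp)
            · exact hnadj (hcomp z hz _ (hpt2 _))
            · exact hemp (φ (pv k u w j)) hmem _ (hpt2 _)
                ((hφadj _ _).2 (pv_chain hk hwne hjk))
          have hQne : pt (φ (pv k u w (j + 1))) ≠ Q := by
            intro hq
            exact hnext (hq ▸ hpt2 _)
          have hRN : pt (φ (pv k u w (j + 1))) ∈ RN H Prt Q :=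
            mem_RN.2 ⟨hpt1 _, hQne, hpure⟩
          exact ih (i + 1) (j + 1) _ (by omega) (by omega) (Tset_succ_mem hQT hRN)
            (hpt2 _) (by omega)
        by_cases hj0 : j = 0
        · -- then Q = P, and v is a witness
          have hQP : Q = P := by
            have : i = 0 := by omega
            rw [this] at hQT
            simpa [Tset] using hQT
          refine advance (φ (Sum.inl v)) (hQP ▸ hv) ?_
          refine mt (hφadj _ _).1 ?_
          exact branch_not_adj hk hwne (Ne.symm huv) (Ne.symm hwv) (by omega) (by omega)
        -- j ≥ 1
        by_cases hbr : ∃ a : Fin n, φ (Sum.inl a) ∈ Q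
        · obtain ⟨a, ha⟩ := hbr
          refine advance _ ha ?_
          refine mt (hφadj _ _).1 ?_
          have haw : a ≠ w := fun hq => hwin (hq ▸ ha)
          by_cases hau : a = u
          · subst hau
            exact base_not_adj hk hwne (by omega) (by omega)
          · exact branch_not_adj hk hwne hau haw (by omega) (by omega)
        · by_cases hop : ∃ w', w' ≠ u ∧ w' ≠ w ∧ ∃ m', 1 ≤ m' ∧ m' ≤ k ∧ φ (pv k u w' m') ∈ Q
          · obtain ⟨w', hw'u, hw'w, m', hm1', hmk', hzin⟩ := hop
            refine advance _ hzin ?_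
            refine mt (hφadj _ _).1 ?_
            exact cross_not_adj hk hwu hw'u hw'w hm1' hmk' (by omega) (by omega)
          · push_neg at hbr
            refine ⟨Q, Tset_mono (by omega) hQT, Or.inr ⟨hbr, ⟨j, by omega, hjk, hmem⟩, ?_⟩⟩
            intro w'' hw''u hex
            by_contra hne''
            exact hop ⟨w'', hw''u, hne'', hex⟩
    have h0 : φ (pv k u w 0) ∈ P := by rw [pv_zero]; exact hu
    exact adv (k + 1) 0 0 P (by omega) le_rfl (by simp [Tset]) h0 (by omega)
  -- assemble the injection
  have hchoice : ∀ w : Fin n, ∃ R : Finset β, (w ≠ u ∧ w ≠ v) →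
      R ∈ Tset H Prt P (k + 1) ∧
        ((φ (Sum.inl w) ∈ R) ∨
          ((∀ a : Fin n, φ (Sum.inl a) ∉ R) ∧
           (∃ m, 1 ≤ m ∧ m ≤ k ∧ φ (pv k u w m) ∈ R) ∧
           (∀ w' : Fin n, w' ≠ u →
             (∃ m, 1 ≤ m ∧ m ≤ k ∧ φ (pv k u w' m) ∈ R) → w' = w))) := by
    intro w
    by_cases h : w ≠ u ∧ w ≠ v
    · obtain ⟨R, hR⟩ := claim w h.1 h.2
      exact ⟨R, fun _ => hR⟩
    · exact ⟨∅, fun h' => absurd h' h⟩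
  choose f hf using hchoice
  set W : Finset (Fin n) := (Finset.univ.erase u).erase v with hW
  have hWmem : ∀ w ∈ W, w ≠ u ∧ w ≠ v := by
    intro w hw
    rw [hW, Finset.mem_erase, Finset.mem_erase] at hw
    exact ⟨hw.2.1, hw.1⟩
  have hmapsto : ∀ w ∈ W, f w ∈ (Tset H Prt P (k + 1)).erase P := by
    intro w hw
    obtain ⟨hw1, hw2⟩ := hWmem w hw
    obtain ⟨hT, hdisj2⟩ := hf w ⟨hw1, hw2⟩
    rw [Finset.mem_erase]
    refine ⟨?_, hT⟩
    rcases hdisj2 with hbr | ⟨hnobr, -, -⟩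
    · intro hq
      rcases hPbr w (hq ▸ hbr) with h | h
      · exact hw1 h
      · exact hw2 h
    · intro hq
      exact hnobr u (hq ▸ hu)
  have hinj : Set.InjOn f (W : Set (Fin n)) := by
    intro w hw w' hw' hff
    by_contra hne
    obtain ⟨hw1, hw2⟩ := hWmem w (by exact_mod_cast hw)
    obtain ⟨hw1', hw2'⟩ := hWmem w' (by exact_mod_cast hw')
    obtain ⟨hT, hc⟩ := hf w ⟨hw1, hw2⟩
    obtain ⟨hT', hc'⟩ := hf w' ⟨hw1', hw2'⟩
    have hfP : f w ≠ P := by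
      have := hmapsto w (by exact_mod_cast hw)
      exact (Finset.mem_erase.1 this).1
    rcases hc with hbr | ⟨hnobr, hpath, huniq⟩
    · rcases hc' with hbr' | ⟨hnobr', hpath', huniq'⟩
      · -- both branch-resolved in the same part
        have : w = w' := hgood (f w) (Tset_subset hP _ hT) hfP _ _ hbr (hff ▸ hbr')
        exact hne this
      · exact hnobr' w (hff ▸ hbr)
    · rcases hc' with hbr' | ⟨hnobr', hpath', huniq'⟩
      · exact hnobr w' (hff.symm ▸ hbr')
      · -- both stuck
        obtain ⟨m', hm1', hmk', hmem'⟩ := hpath'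
        have : w' = w := huniq w' hw1' ⟨m', hm1', hmk', hff ▸ hmem'⟩
        exact hne this.symm
  have hWcard : W.card = n - 2 := by
    rw [hW, Finset.card_erase_of_mem, Finset.card_erase_of_mem (Finset.mem_univ u),
      Finset.card_univ, Fintype.card_fin]
    · rfl
    · exact Finset.mem_erase.2 ⟨Ne.symm huv, Finset.mem_univ v⟩
  have hTcard : (Tset H Prt P (k + 1)).card ≤ d ^ (k + 1) :=
    Tset_card (by omega) hred hP (k + 1)
  have hPmem : P ∈ Tset H Prt P (k + 1) := Tset_mono (Nat.zero_le _) (by simp [Tset])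
  have hfinal : W.card ≤ ((Tset H Prt P (k + 1)).erase P).card :=
    Finset.card_le_card_of_injOn f hmapsto hinj
  rw [Finset.card_erase_of_mem hPmem] at hfinal
  omega

end Static


section Assemble

variable {n k d : ℕ} {β : Type*} [Fintype β] [DecidableEq β] {H : SimpleGraph β}

lemma noSeq (hd : 2 ≤ d) (hk : 1 ≤ k) (hn : 2 ≤ n) (hcard : d ^ (k + 1) ≤ n - 2)
    (e : SG n k ≃g H) {d' : ℕ} (hd' : d' ≤ d - 1) (hseq : TwwLE H d') : False := by
  classical
  set bv : Fin n → β := fun a => e (Sum.inl a) with hbv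
  have hbvinj : ∀ a b : Fin n, bv a = bv b → a = b := fun a b hab =>
    Sum.inl.inj (e.injective hab)
  set GoodP : Finset (Finset β) → Prop :=
    fun PP => ∀ Q ∈ PP, ∀ a b : Fin n, bv a ∈ Q → bv b ∈ Q → a = b with hGoodP
  have hstart : GoodP (Finset.univ.image fun x => ({x} : Finset β)) := by
    intro Q hQ a b ha hb
    obtain ⟨x, -, rfl⟩ := Finset.mem_image.1 hQ
    rw [Finset.mem_singleton] at ha hb
    exact hbvinj a b (ha.trans hb.symm)
  have hend : ¬ GoodP {Finset.univ} := by
    intro hgood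
    have h01 : (⟨0, by omega⟩ : Fin n) = ⟨1, by omega⟩ :=
      hgood Finset.univ (Finset.mem_singleton_self _) _ _ (Finset.mem_univ _)
        (Finset.mem_univ _)
    have := congrArg Fin.val h01
    simp at this
  obtain ⟨PP, QQ, hreach, hstep, hgoodPP, hbadQQ⟩ := firstFail hseq hstart hend
  have hInvPP : Inv PP := Inv.reach Inv.start hreach
  obtain ⟨hmerge, hredQQ⟩ := hstep
  have hInvQQ : Inv QQ := hInvPP.merge hmerge
  obtain ⟨A, hA, B, hB, hAB, hQQ⟩ := hmerge
  have hmemPP : ∀ Q ∈ QQ, Q ≠ A ∪ B → Q ∈ PP := by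
    intro Q hQ hne
    rw [hQQ] at hQ
    rcases Finset.mem_insert.1 hQ with h | h
    · exact absurd h hne
    · exact Finset.mem_of_mem_erase (Finset.mem_of_mem_erase h)
  have hbad2 : ∃ Qs ∈ QQ, ∃ a b : Fin n, bv a ∈ Qs ∧ bv b ∈ Qs ∧ a ≠ b := by
    by_contra hno
    push_neg at hno
    exact hbadQQ fun Q hQ a b ha hb => hno Q hQ a b ha hb
  obtain ⟨Qs, hQs, a, b, ha, hb, hab⟩ := hbad2
  have hQsAB : Qs = A ∪ B := by
    by_contra hne
    exact hab (hgoodPP Qs (hmemPP Qs hQs hne) a b ha hb)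
  subst hQsAB
  have hABQQ : A ∪ B ∈ QQ := by rw [hQQ]; exact Finset.mem_insert_self _ _
  have hred' : ∀ Q ∈ QQ, redDeg H QQ Q ≤ d - 1 := fun Q hQ =>
    le_trans (hredQQ Q hQ) hd'
  have final : ∀ u v2 : Fin n, u ≠ v2 → bv u ∈ A → bv v2 ∈ B → False := by
    intro u v2 huv huA hvB
    have hgood' : ∀ Q ∈ QQ, Q ≠ A ∪ B →
        ∀ a' b' : Fin n, e (Sum.inl a') ∈ Q → e (Sum.inl b') ∈ Q → a' = b' := by
      intro Q hQ hne a' b' ha' hb'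
      exact hgoodPP Q (hmemPP Q hQ hne) a' b' ha' hb'
    have hPbr' : ∀ c : Fin n, e (Sum.inl c) ∈ A ∪ B → c = u ∨ c = v2 := by
      intro c hc
      rcases Finset.mem_union.1 hc with h | h
      · exact Or.inl (hgoodPP A hA c u h huA)
      · exact Or.inr (hgoodPP B hB c v2 h hvB)
    have key := static hd hk e QQ hInvQQ hred' (A ∪ B) hABQQ u v2 huv
      (Finset.mem_union_left _ huA) (Finset.mem_union_right _ hvB) hgood' hPbr'
    have hpos : 1 ≤ d ^ (k + 1) := Nat.one_le_pow _ _ (by omega)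
    omega
  rcases Finset.mem_union.1 ha with haA | haB <;> rcases Finset.mem_union.1 hb with hbA | hbB
  · exact hab (hgoodPP A hA a b haA hbA)
  · exact final a b hab haA hbB
  · exact final b a (Ne.symm hab) hbA haB
  · exact hab (hgoodPP B hB a b haB hbB)

end Assemble

/-- For `d, n ≥ 2` and `1 ≤ k < log_d (n-1) - 1`, the `k`-subdivision of `Kₙ`
has twin-width at least `d`. -/
theorem kSubdivision_complete_lower (d n k : ℕ) (hd : 2 ≤ d) (hn : 2 ≤ n) (hk : 1 ≤ k)
    (hlog : (k : ℝ) < Real.logb d ((n : ℝ) - 1) - 1)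
    {β : Type*} [Fintype β] [DecidableEq β] (H : SimpleGraph β)
    (hiso : Nonempty (H ≃g Subdiv (⊤ : SimpleGraph (Fin n)) fun _ _ => k)) :
    d ≤ tww H := by
  classical
  obtain ⟨e0⟩ := hiso
  have e : SG n k ≃g H := e0.symm
  -- numeric consequence of the logarithmic hypothesis
  have hn1 : (0 : ℝ) < (n : ℝ) - 1 := by
    have : (2 : ℝ) ≤ (n : ℝ) := by exact_mod_cast hn
    linarith
  have hd1 : (1 : ℝ) < (d : ℝ) := by exact_mod_cast hd
  have hlog2 : ((k + 1 : ℕ) : ℝ) < Real.logb d ((n : ℝ) - 1) := by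
    push_cast
    linarith
  have hpow : (d : ℝ) ^ ((k + 1 : ℕ) : ℝ) < (n : ℝ) - 1 :=
    (Real.lt_logb_iff_rpow_lt hd1 hn1).1 hlog2
  rw [Real.rpow_natCast] at hpow
  have hcard : d ^ (k + 1) ≤ n - 2 := by
    have h2 : ((d ^ (k + 1) : ℕ) : ℝ) < ((n - 1 : ℕ) : ℝ) := by
      push_cast [Nat.cast_sub (by omega : 1 ≤ n)]
      linarith
    have h3 : d ^ (k + 1) < n - 1 := by exact_mod_cast h2
    omega
  haveI hβ : Nonempty β := ⟨e (Sum.inl ⟨0, by omega⟩)⟩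
  have hS : {dd | TwwLE H dd}.Nonempty := ⟨_, exists_seq H⟩
  have hmem : TwwLE H (tww H) := Nat.sInf_mem hS
  by_contra hcon
  push_neg at hcon
  exact noSeq hd hk hn hcard e (by omega : tww H ≤ d - 1) hmem

end TwwPaper
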